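/- Knowing how many of a given finite list of programs halt suffices to compute exactly which ones halt: there exists a partial computable function F taking a pair (L, k) of a list of codes L and a natural number k, such that whenever k equals the number of codes c in L with (c.eval 0).Dom, F (L, k) is defined and equals the list of Booleans b of the same length as L with b[i] = true if and only if the i-th code of L halts on input 0. -/

import Mathlib

open scoped Classical

open Nat.Partrec (Code)
open Nat.Partrec.Code

private lemma foldl_countP {α} (p : α → Bool) (l : List α) :
    ∀ n : ℕ, l.foldl (fun n c => n + if p c then 1 else 0) n = n + l.countP p := by
  induction l with
  | nil => simp
  | cons a l ih =>
    intro n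
    simp only [List.foldl_cons, List.countP_cons, ih]
    by_cases h : p a <;> simp [h] <;> omega

private lemma countP_map_eq {α} {p q : α → Bool} {l : List α}
    (hpq : ∀ a ∈ l, p a → q a) (h : l.countP p = l.countP q) :
    l.map p = l.map q := by
  induction l with
  | nil => rfl
  | cons a l ih =>
    have hle : l.countP p ≤ l.countP q :=
      List.countP_mono_left fun a ha => hpq a (List.mem_cons_of_mem _ ha)
    simp only [List.countP_cons] at h
    by_cases hp : p a
    · have hq : q a := hpq a List.mem_cons_self hp
      simp only [hp, hq, if_pos rfl] at h ⊢
      simp [hp, hq, ih (fun a ha hpa => hpq a (List.mem_cons_of_mem _ ha) hpa) (by omega)]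
    · by_cases hq : q a
      · simp only [hp, hq] at h
        simp at h
        omega
      · simp [hp, hq, ih (fun a ha hpa => hpq a (List.mem_cons_of_mem _ ha) hpa)
          (by simpa [hp, hq] using h)]

private lemma exists_step (L : List Code) :
    ∃ s : ℕ, ∀ c ∈ L, (c.eval 0).Dom → (evaln s c 0).isSome := by
  induction L with
  | nil => exact ⟨0, by simp⟩
  | cons c L ih =>
    obtain ⟨s₁, hs₁⟩ := ih
    by_cases hc : (c.eval 0).Dom
    · obtain ⟨x, hx⟩ := Part.dom_iff_mem.1 hc
      obtain ⟨s₂, hs₂⟩ := evaln_complete.1 hx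
      refine ⟨max s₁ s₂, ?_⟩
      intro d hd hdd
      rcases List.mem_cons.1 hd with rfl | hd
      · exact Option.isSome_iff_exists.2 ⟨x, evaln_mono (le_max_right _ _) hs₂⟩
      · exact Option.isSome_iff_exists.2 <| by
          obtain ⟨y, hy⟩ := Option.isSome_iff_exists.1 (hs₁ d hd hdd)
          exact ⟨y, evaln_mono (le_max_left _ _) hy⟩
    · refine ⟨s₁, ?_⟩
      intro d hd hdd
      rcases List.mem_cons.1 hd with rfl | hd
      · exact absurd hdd hc
      · exact hs₁ d hd hdd

theorem halting_count_determines_halting_set :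
    ∃ F : List Nat.Partrec.Code × ℕ →. List Bool, Partrec F ∧
      ∀ (L : List Nat.Partrec.Code) (k : ℕ),
        k = (L.countP fun c => decide ((c.eval 0).Dom)) →
        F (L, k) = Part.some (L.map fun c => decide ((c.eval 0).Dom)) := by
  classical
  refine ⟨fun p =>
    (Nat.rfind fun s => Part.some
        (decide ((p.1.countP fun c => (evaln s c 0).isSome) = p.2))).map
      (fun s => p.1.map fun c => (evaln s c 0).isSome), ?_, ?_⟩
  · -- computability
    have hev : Computable₂ fun (q : (List Code × ℕ) × ℕ) (c : Code) =>
        (evaln q.2 c 0).isSome :=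
      (Primrec.option_isSome.comp
        (primrec_evaln.comp
          (((Primrec.snd.comp Primrec.fst).pair Primrec.snd).pair
            (Primrec.const 0)))).to_comp.to₂
    have hcount : Computable fun q : (List Code × ℕ) × ℕ =>
        q.1.1.countP fun c => (evaln q.2 c 0).isSome := by
      have : Primrec₂ fun (q : (List Code × ℕ) × ℕ) (nc : ℕ × Code) =>
          nc.1 + if (evaln q.2 nc.2 0).isSome then 1 else 0 := by
        refine Primrec.nat_add.comp₂ (Primrec.fst.comp₂ Primrec₂.right) ?_
        refine (Primrec.ite ?_ (Primrec.const 1) (Primrec.const 0))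
        exact Primrec.eq.comp
          ((Primrec.option_isSome.comp
            (primrec_evaln.comp
              (((Primrec.snd.comp Primrec.fst).pair (Primrec.snd.comp Primrec.snd)).pair
                (Primrec.const 0))))) (Primrec.const true)
      have hfold := Primrec.list_foldl
        (Primrec.fst.comp (Primrec.fst (α := List Code × ℕ) (β := ℕ)))
        (Primrec.const 0) this
      exact (hfold.of_eq fun q => by
        simpa using foldl_countP (fun c => (evaln q.2 c 0).isSome) q.1.1 0).to_comp
    have hbool : Computable fun q : (List Code × ℕ) × ℕ =>
        decide ((q.1.1.countP fun c => (evaln q.2 c 0).isSome) = q.1.2) :=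
      Primrec.eq.decide.to_comp.comp hcount (Computable.snd.comp Computable.fst)
    have hrf : Partrec fun p : List Code × ℕ =>
        Nat.rfind fun s => Part.some
          (decide ((p.1.countP fun c => (evaln s c 0).isSome) = p.2)) :=
      Partrec.rfind (hbool.partrec.to₂)
    have hgprim : Primrec₂ fun (q : (List Code × ℕ) × ℕ) (c : Code) =>
        (evaln q.2 c 0).isSome :=
      (Primrec.option_isSome.comp
        (primrec_evaln.comp
          (((Primrec.snd.comp Primrec.fst).pair Primrec.snd).pair
            (Primrec.const 0)))).to₂
    have hmap : Computable₂ fun (q : (List Code × ℕ)) (s : ℕ) =>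
        q.1.map fun c => (evaln s c 0).isSome :=
      (Primrec.list_map ((Primrec.fst.comp Primrec.fst)) hgprim).to_comp.to₂
    exact hrf.map hmap
  · -- correctness
    intro L k hk
    have hpq : ∀ s, ∀ c ∈ L, (evaln s c 0).isSome → decide ((c.eval 0).Dom) := by
      intro s c _ h
      obtain ⟨x, hx⟩ := Option.isSome_iff_exists.1 h
      exact decide_eq_true (Part.dom_iff_mem.2 ⟨x, evaln_sound hx⟩)
    obtain ⟨s₀, hs₀⟩ := exists_step L
    have hP : (L.countP fun c => (evaln s₀ c 0).isSome) = k := by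
      rw [hk]
      refine List.countP_congr fun c hc => ?_
      by_cases hd : (c.eval 0).Dom
      · simp [hs₀ c hc hd, hd]
      · have hn : ¬ (evaln s₀ c 0).isSome = true := fun h =>
          hd (of_decide_eq_true (hpq s₀ c hc h))
        simp [hd, hn]
    have hdom : (Nat.rfind fun s => Part.some
        (decide ((L.countP fun c => (evaln s c 0).isSome) = k))).Dom :=
      Nat.rfind_dom.2 ⟨s₀, by simpa using hP, fun {m} _ => trivial⟩
    apply Part.eq_some_iff.2
    set s := (Nat.rfind fun s => Part.some
        (decide ((L.countP fun c => (evaln s c 0).isSome) = k))).get hdom with hs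
    have hspec := Nat.rfind_spec (Part.get_mem hdom)
    have hcount : (L.countP fun c => (evaln s c 0).isSome) = k := by
      simpa using hspec
    have := countP_map_eq (p := fun c => (evaln s c 0).isSome)
      (q := fun c => decide ((c.eval 0).Dom)) (hpq s) (by rw [hcount, hk])
    exact (Part.mem_map_iff _).2 ⟨s, Part.get_mem hdom, this⟩
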